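/- In a binary cube-free word, the factor ababa occurs only as a prefix, as a suffix, or inside an occurrence of the factor aababaa. -/
import Mathlib


/-- `w` has period `p`: `w[i] = w[i+p]` whenever both positions exist. -/
def HasPeriod {α : Type*} (w : List α) (p : ℕ) : Prop :=
  ∀ i, (h : i + p < w.length) → w.get ⟨i, by omega⟩ = w.get ⟨i + p, h⟩

/-- A finite word is cube-free if it has no nonempty factor of the form `x ++ x ++ x`. -/
def Cubefree {α : Type*} (w : List α) : Prop :=
  ∀ x : List α, x ≠ [] → ¬ (x ++ x ++ x) <:+: w

/-- `x` is a factor of the infinite word `w`. -/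
def FactorOfInf {α : Type*} (x : List α) (w : ℕ → α) : Prop :=
  ∃ i, x = (List.range x.length).map fun k => w (i + k)

/-- An infinite word is cube-free if all its finite factors are cube free. -/
def CubefreeInf {α : Type*} (w : ℕ → α) : Prop :=
  ∀ x : List α, x ≠ [] → ¬ FactorOfInf (x ++ x ++ x) w

/-- Concatenation of a finite word and an infinite word. -/
def catInf {α : Type*} (u : List α) (w : ℕ → α) : ℕ → α :=
  fun k => if h : k < u.length then u.get ⟨k, h⟩ else w (k - u.length)

/-- The Thue–Morse morphism over `Bool` (`false` = a, `true` = b): `c ↦ c (¬c)`. -/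
def theta (w : List Bool) : List Bool := w.flatMap fun c => [c, !c]

/-- The Thue–Morse word over `Bool` (`false` = a, `true` = b), 0-indexed. -/
def tm : ℕ → Bool := fun n => (Nat.digits 2 n).sum % 2 == 1

/-- A binary word is uniform if it is `c ++ θ(u) ++ d` with `c, d` empty or a single letter. -/
def Uniform (w : List Bool) : Prop :=
  ∃ c u d : List Bool, c.length ≤ 1 ∧ d.length ≤ 1 ∧ w = c ++ theta u ++ d

/-- A binary word is right aligned if it is `c ++ θ(u)` with `c` empty or a single letter. -/
def RightAligned (w : List Bool) : Prop :=
  ∃ c u : List Bool, c.length ≤ 1 ∧ w = c ++ theta u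

/-- The four markers aabaa, ababa, babab, bbabb. -/
def markers : List (List Bool) :=
  [[false,false,true,false,false], [false,true,false,true,false],
   [true,false,true,false,true], [true,true,false,true,true]]

/-- The finite word `x` occurs in the infinite word `w` at position `i`. -/
def MatchesAt {α : Type*} (x : List α) (w : ℕ → α) (i : ℕ) : Prop :=
  ∀ k, (h : k < x.length) → x.get ⟨k, h⟩ = w (i + k)

/-- `u` is T-extendable: for some finite `w` and some position `n`,
`u ++ w ++ T[n..∞)` is cube free. -/
def TExtendable (u : List Bool) : Prop :=
  ∃ (w : List Bool) (n : ℕ), CubefreeInf (catInf (u ++ w) fun k => tm (n + k))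

/-- `u` is right extendable: some infinite extension of `u` is cube free. -/
def RightExtendable {α : Type*} (u : List α) : Prop :=
  ∃ x : ℕ → α, CubefreeInf (catInf u x)


theorem ababa_occurrence (w : List Bool) (hcf : Cubefree w) (i : ℕ)
    (hocc : [false,true,false,true,false] <+: w.drop i) :
    i = 0 ∨ i + 5 = w.length ∨
      (1 ≤ i ∧ [false,false,true,false,true,false,false] <+: w.drop (i - 1)) := by
  obtain ⟨t, ht⟩ := hocc
  by_cases h0 : i = 0
  · exact Or.inl h0
  right
  have hlen := congrArg List.length ht
  simp [List.length_drop] at hlen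
  have hi5 : i + 5 ≤ w.length := by omega
  by_cases hend : i + 5 = w.length
  · exact Or.inl hend
  right
  refine ⟨by omega, ?_⟩
  have hlt : i + 5 < w.length := lt_of_le_of_ne hi5 hend
  obtain ⟨d, t', rfl⟩ : ∃ d t', t = d :: t' := by
    cases t with
    | nil => exfalso; simp at hlen; omega
    | cons d t' => exact ⟨d, t', rfl⟩
  clear hlen
  have hdrop : w.drop (i - 1) = w[i-1]'(by omega) :: w.drop i := by
    rw [List.drop_eq_getElem_cons (by omega : i - 1 < w.length),
      show i - 1 + 1 = i by omega]
  have hsuf : w.drop (i - 1) <:+ w := List.drop_suffix _ _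
  have hd : d = false := by
    by_contra hdt
    have hdt' : d = true := by cases d <;> simp_all
    apply hcf [false, true] (by simp)
    apply List.IsInfix.trans _ (List.drop_suffix i w).isInfix
    refine List.IsPrefix.isInfix ⟨t', ?_⟩
    rw [← ht, hdt']
    simp
  have hc : w[i-1]'(by omega) = false := by
    by_contra hct
    have hct' : w[i-1]'(by omega) = true := by simp_all
    apply hcf [true, false] (by simp)
    apply List.IsInfix.trans _ hsuf.isInfix
    refine List.IsPrefix.isInfix ⟨d :: t', ?_⟩
    rw [hdrop, ← ht, hct']
    simp
  refine ⟨t', ?_⟩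
  rw [hdrop, ← ht, hc, hd]
  simp
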